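/- Let L > 0 and let g : ℝ → ℝ be a continuous L-periodic function. Then there exists a unique C² L-periodic function h : ℝ → ℝ such that h''(x) − h(x) = g(x) for all x ∈ ℝ. -/

import Mathlib

private lemma ode1_neg (u : ℝ → ℝ) (hu : Differentiable ℝ u)
    (hdu : ∀ x, deriv u x = - u x) : ∀ x, u x = u 0 * Real.exp (-x) := by
  have key : ∀ x, u x * Real.exp x = u 0 * Real.exp 0 := by
    intro x
    apply is_const_of_deriv_eq_zero (f := fun x => u x * Real.exp x)
    · exact hu.mul Real.differentiable_exp
    · intro y
      have h1 : HasDerivAt (fun x => u x * Real.exp x)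
          (deriv u y * Real.exp y + u y * Real.exp y) y :=
        ((hu y).hasDerivAt).mul (Real.hasDerivAt_exp y)
      rw [h1.deriv, hdu y]; ring
  intro x
  have := key x
  have hx : Real.exp x ≠ 0 := (Real.exp_pos x).ne'
  field_simp [Real.exp_neg] at this ⊢
  rw [Real.exp_zero, mul_one] at this; rw [← this, mul_assoc, ← Real.exp_add, add_neg_cancel, Real.exp_zero, mul_one]

private lemma ode1_pos (u : ℝ → ℝ) (hu : Differentiable ℝ u)
    (hdu : ∀ x, deriv u x = u x) : ∀ x, u x = u 0 * Real.exp x := by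
  have key : ∀ x, u x * Real.exp (-x) = u 0 * Real.exp (-0) := by
    intro x
    apply is_const_of_deriv_eq_zero (f := fun x => u x * Real.exp (-x))
    · exact hu.mul (Real.differentiable_exp.comp differentiable_neg)
    · intro y
      have he : HasDerivAt (fun x : ℝ => Real.exp (-x)) (Real.exp (-y) * (-1)) y :=
        (Real.hasDerivAt_exp (-y)).comp y ((hasDerivAt_id y).neg)
      have h1 : HasDerivAt (fun x => u x * Real.exp (-x))
          (deriv u y * Real.exp (-y) + u y * (Real.exp (-y) * (-1))) y :=
        ((hu y).hasDerivAt).mul he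
      rw [h1.deriv, hdu y]; ring
  intro x
  have := key x
  have hx : Real.exp (-x) ≠ 0 := (Real.exp_pos (-x)).ne'
  rw [neg_zero, Real.exp_zero, mul_one] at this
  have : u x = u 0 / Real.exp (-x) := by rw [eq_div_iff hx]; exact this
  rw [this, Real.exp_neg]; field_simp

private lemma ode2_zero (k : ℝ → ℝ) (hk : Differentiable ℝ k)
    (hk' : Differentiable ℝ (deriv k)) (hkk : ∀ x, deriv (deriv k) x = k x)
    (h0 : k 0 = 0) (h0' : deriv k 0 = 0) : ∀ x, k x = 0 := by
  obtain ⟨u, hu_def⟩ : ∃ u : ℝ → ℝ, u = fun x => deriv k x - k x := ⟨_, rfl⟩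
  have hu : Differentiable ℝ u := hu_def ▸ hk'.sub hk
  have hdu : ∀ x, deriv u x = - u x := by
    intro x
    have : deriv u x = deriv (deriv k) x - deriv k x := by
      rw [hu_def]; exact deriv_sub (hk' x) (hk x)
    rw [this, hkk x]; simp [hu_def]
  have hu0 : u 0 = 0 := by simp [hu_def, h0, h0']
  have huz : ∀ x, u x = 0 := by
    intro x; rw [ode1_neg u hu hdu x, hu0]; ring
  have hdk : ∀ x, deriv k x = k x := by
    intro x; have := huz x; simp [hu_def] at this; linarith
  intro x
  rw [ode1_pos k hk hdk x, h0]; ring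

private lemma ode2_periodic (k : ℝ → ℝ) (L : ℝ) (hL : 0 < L)
    (hk : Differentiable ℝ k) (hk' : Differentiable ℝ (deriv k))
    (hkk : ∀ x, deriv (deriv k) x = k x) (hper : Function.Periodic k L) :
    ∀ x, k x = 0 := by
  have hperd : Function.Periodic (deriv k) L := by
    intro x
    have h1 : deriv (fun y => k (y + L)) x = deriv k (x + L) := deriv_comp_add_const k L x
    rw [← h1]
    congr 1
    ext y; exact hper y
  obtain ⟨u, hu_def⟩ : ∃ u : ℝ → ℝ, u = fun x => deriv k x - k x := ⟨_, rfl⟩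
  have hu : Differentiable ℝ u := hu_def ▸ hk'.sub hk
  have hdu : ∀ x, deriv u x = - u x := by
    intro x
    have : deriv u x = deriv (deriv k) x - deriv k x := by
      rw [hu_def]; exact deriv_sub (hk' x) (hk x)
    rw [this, hkk x]; simp [hu_def]
  have huper : Function.Periodic u L := fun x => by simp [hu_def, hperd x, hper x]
  have hu0 : u 0 = 0 := by
    have h1 := huper 0
    have h2 := ode1_neg u hu hdu L
    rw [zero_add] at h1
    rw [h1] at h2
    have hne : Real.exp (-L) ≠ 1 := by
      rw [Ne, Real.exp_eq_one_iff]; linarith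
    have hfac : u 0 * (1 - Real.exp (-L)) = 0 := by linear_combination h2
    rcases mul_eq_zero.mp hfac with h | h
    · exact h
    · exact absurd (by linarith : Real.exp (-L) = 1) hne
  have huz : ∀ x, u x = 0 := by
    intro x; rw [ode1_neg u hu hdu x, hu0]; ring
  have hdk : ∀ x, deriv k x = k x := by
    intro x; have := huz x; simp [hu_def] at this; linarith
  have hk0 : k 0 = 0 := by
    have h1 := hper 0
    have h2 := ode1_pos k hk hdk L
    rw [zero_add] at h1
    rw [h1] at h2
    have hne : Real.exp L ≠ 1 := by
      rw [Ne, Real.exp_eq_one_iff]; linarith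
    have hfac : k 0 * (1 - Real.exp L) = 0 := by linear_combination h2
    rcases mul_eq_zero.mp hfac with h | h
    · exact h
    · exact absurd (by linarith : Real.exp L = 1) hne
  intro x
  rw [ode1_pos k hk hdk x, hk0]; ring

private lemma solve2 (a b p q : ℝ) (hdet : a * a - b * b ≠ 0) :
    ∃ A B : ℝ, A * a + B * b = p ∧ A * b + B * a = q :=
  ⟨(p * a - q * b) / (a * a - b * b), (q * a - p * b) / (a * a - b * b),
    by rw [div_mul_eq_mul_div, div_mul_eq_mul_div, ← add_div, div_eq_iff hdet]; ring,
    by rw [div_mul_eq_mul_div, div_mul_eq_mul_div, ← add_div, div_eq_iff hdet]; ring⟩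

/-- For every continuous L-periodic g there is a unique C²
L-periodic h with h'' − h = g. -/
theorem periodic_ode_unique_solution
    (L : ℝ) (hL : 0 < L) (g : ℝ → ℝ)
    (hg : Continuous g) (hgper : Function.Periodic g L) :
    ∃! h : ℝ → ℝ, ContDiff ℝ 2 h ∧ Function.Periodic h L ∧
      ∀ x, deriv (deriv h) x - h x = g x := by
  have hcg : Continuous (fun t => Real.cosh t * g t) := Real.continuous_cosh.mul hg
  have hsg : Continuous (fun t => Real.sinh t * g t) := Real.continuous_sinh.mul hg
  set C : ℝ → ℝ := fun x => ∫ t in (0:ℝ)..x, Real.cosh t * g t with hCdef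
  set S : ℝ → ℝ := fun x => ∫ t in (0:ℝ)..x, Real.sinh t * g t with hSdef
  have hCd : ∀ x, HasDerivAt C (Real.cosh x * g x) x := fun x =>
    (hcg.integral_hasStrictDerivAt 0 x).hasDerivAt
  have hSd : ∀ x, HasDerivAt S (Real.sinh x * g x) x := fun x =>
    (hsg.integral_hasStrictDerivAt 0 x).hasDerivAt
  have hC0 : C 0 = 0 := intervalIntegral.integral_same
  have hS0 : S 0 = 0 := intervalIntegral.integral_same
  set cL := Real.cosh L with hcL
  set sL := Real.sinh L with hsL
  have hcL1 : 1 < cL := Real.one_lt_cosh.mpr hL.ne'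
  have hsq : sL ^ 2 = cL ^ 2 - 1 := by
    have := Real.cosh_sq_sub_sinh_sq L; rw [hcL, hsL]; linarith
  have hdet : (cL - 1) * (cL - 1) - sL * sL ≠ 0 := by nlinarith [hsq]
  obtain ⟨A, B, hAB1, hAB2⟩ := solve2 (cL - 1) sL
    (-(sL * C L - cL * S L)) (-(cL * C L - sL * S L)) hdet
  set h : ℝ → ℝ := fun x =>
    A * Real.cosh x + B * Real.sinh x + Real.sinh x * C x - Real.cosh x * S x with hhdef
  set h1 : ℝ → ℝ := fun x =>
    A * Real.sinh x + B * Real.cosh x + Real.cosh x * C x - Real.sinh x * S x with hh1def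
  have hD1 : ∀ x, HasDerivAt h (h1 x) x := by
    intro x
    have H := ((((Real.hasDerivAt_cosh x).const_mul A).add
        ((Real.hasDerivAt_sinh x).const_mul B)).add
        ((Real.hasDerivAt_sinh x).mul (hCd x))).sub
        ((Real.hasDerivAt_cosh x).mul (hSd x))
    refine H.congr_deriv (Eq.symm ?_)
    rw [hh1def]; ring
  have hD2 : ∀ x, HasDerivAt h1 (h x + g x) x := by
    intro x
    have H := ((((Real.hasDerivAt_sinh x).const_mul A).add
        ((Real.hasDerivAt_cosh x).const_mul B)).add
        ((Real.hasDerivAt_cosh x).mul (hCd x))).sub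
        ((Real.hasDerivAt_sinh x).mul (hSd x))
    refine H.congr_deriv (Eq.symm ?_)
    rw [hhdef]
    have hsq' := Real.cosh_sq_sub_sinh_sq x
    linear_combination (-(g x)) * hsq'
  have hdiffh : Differentiable ℝ h := fun x => (hD1 x).differentiableAt
  have hdiffh1 : Differentiable ℝ h1 := fun x => (hD2 x).differentiableAt
  have hderiv : deriv h = h1 := funext fun x => (hD1 x).deriv
  have hderiv1 : deriv h1 = fun x => h x + g x := funext fun x => (hD2 x).deriv
  have hdd : ∀ x, deriv (deriv h) x = h x + g x := fun x => by
    rw [hderiv]; exact (hD2 x).deriv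
  -- ContDiff
  have hcd : ContDiff ℝ 2 h := by
    rw [show (2 : WithTop ℕ∞) = 1 + 1 by norm_num, contDiff_succ_iff_deriv]
    refine ⟨hdiffh, by simp, ?_⟩
    rw [hderiv, contDiff_one_iff_deriv]
    exact ⟨hdiffh1, by rw [hderiv1]; exact hdiffh.continuous.add hg⟩
  -- boundary matching
  have hh0 : h 0 = A := by rw [hhdef]; simp [hC0, hS0]
  have hh10 : h1 0 = B := by rw [hh1def]; simp [hC0, hS0]
  have hhL : h L = h 0 := by
    rw [hh0, hhdef]
    show A * Real.cosh L + B * Real.sinh L + Real.sinh L * C L - Real.cosh L * S L = A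
    rw [← hcL, ← hsL]
    linear_combination hAB1
  have hh1L : h1 L = h1 0 := by
    rw [hh10, hh1def]
    show A * Real.sinh L + B * Real.cosh L + Real.cosh L * C L - Real.sinh L * S L = B
    rw [← hcL, ← hsL]
    linear_combination hAB2
  -- periodicity of h
  have hhper : Function.Periodic h L := by
    obtain ⟨k, hkdef⟩ : ∃ k : ℝ → ℝ, k = fun x => h (x + L) - h x := ⟨_, rfl⟩
    have hkD1 : ∀ x, HasDerivAt k (h1 (x + L) - h1 x) x := fun x => by
      rw [hkdef]; exact ((hD1 (x + L)).comp_add_const x L).sub (hD1 x)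
    have hkderiv : deriv k = fun x => h1 (x + L) - h1 x := funext fun x => (hkD1 x).deriv
    have hkD2 : ∀ x, HasDerivAt (fun x => h1 (x + L) - h1 x)
        ((h (x + L) + g (x + L)) - (h x + g x)) x := fun x =>
      ((hD2 (x + L)).comp_add_const x L).sub (hD2 x)
    have hkdiff : Differentiable ℝ k := fun x => (hkD1 x).differentiableAt
    have hkdiff' : Differentiable ℝ (deriv k) := by
      rw [hkderiv]; exact fun x => (hkD2 x).differentiableAt
    have hkk : ∀ x, deriv (deriv k) x = k x := by
      intro x
      rw [hkderiv, (hkD2 x).deriv, hgper x, hkdef]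
      ring
    have hk0 : k 0 = 0 := by rw [hkdef]; simp [hhL]
    have hk0' : deriv k 0 = 0 := by rw [hkderiv]; simp [hh1L]
    intro x
    have := ode2_zero k hkdiff hkdiff' hkk hk0 hk0' x
    rw [hkdef] at this
    simpa [sub_eq_zero] using this
  refine ⟨h, ⟨hcd, hhper, fun x => by rw [hdd x]; ring⟩, ?_⟩
  -- uniqueness
  rintro h' ⟨hcd', hper', hode'⟩
  have hdiff' : Differentiable ℝ h' := hcd'.differentiable (by norm_num)
  have hcd1' : ContDiff ℝ 1 (deriv h') := by
    rw [show (2 : WithTop ℕ∞) = 1 + 1 by norm_num, contDiff_succ_iff_deriv] at hcd'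
    exact hcd'.2.2
  have hdiffd' : Differentiable ℝ (deriv h') := hcd1'.differentiable one_ne_zero
  obtain ⟨k, hkdef⟩ : ∃ k : ℝ → ℝ, k = fun x => h' x - h x := ⟨_, rfl⟩
  have hkdiff : Differentiable ℝ k := hkdef ▸ hdiff'.sub hdiffh
  have hkderiv : deriv k = fun x => deriv h' x - deriv h x := by
    rw [hkdef]; exact funext fun x => deriv_sub (hdiff' x) (hdiffh x)
  have hkdiff' : Differentiable ℝ (deriv k) := by
    rw [hkderiv]
    exact hdiffd'.sub (hderiv ▸ hdiffh1)
  have hkk : ∀ x, deriv (deriv k) x = k x := by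
    intro x
    have e1 : deriv (deriv k) x = deriv (deriv h') x - deriv (deriv h) x := by
      rw [hkderiv]
      exact deriv_sub (hdiffd' x) (hderiv ▸ hdiffh1 x)
    have e2 := hode' x
    rw [e1, hdd x, hkdef]
    simp only []
    linarith
  have hkper : Function.Periodic k L := fun x => by
    rw [hkdef]; simp only []; rw [hper' x, hhper x]
  have := ode2_periodic k L hL hkdiff hkdiff' hkk hkper
  funext x
  have hx := this x
  rw [hkdef] at hx
  simpa [sub_eq_zero] using hx
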